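/- arXiv:1501.02292 — 2 statements merged into one kernel-verified Lean document; each statement's English description precedes it below -/
import Mathlib

section
/- Let H be a separable complex Hilbert space with Hilbert basis (v_k)_{k∈ℕ}, and let (λ_k) be a bounded sequence of real numbers. For λ ≠ 0 set f_λ(t) = (i/λ)(e^{−iλt} − 1), and set f_0(t) = t. Then for each t ∈ ℝ there is a unique bounded linear operator Φ(t) on H with Φ(t) v_k = f_{λ_k}(t) v_k for all k, and for T > 0 the operator Φ(T) fails to be injective if and only if there exist an index k and a positive integer m with λ_k ≠ 0 and T = 2πm/|λ_k|. -/
open Complex ENNReal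

/-- The scalar solution of the left-translated Jacobi equation `f'' + iλ f' = 0`,
`f(0) = 0`, `f'(0) = 1`: for `λ ≠ 0`, `f_λ(t) = (i/λ)(e^{-iλt} - 1)`; for `λ = 0`,
`f_0(t) = t`. -/
noncomputable def jacobiScalar (l t : ℝ) : ℂ :=
  if l = 0 then (t : ℂ) else (I / (l : ℂ)) * (Complex.exp (-I * l * t) - 1)

lemma norm_exp_I_sub_one_le (θ : ℝ) : ‖Complex.exp ((θ : ℂ) * I) - 1‖ ≤ |θ| := by
  have h : Complex.exp ((θ : ℂ) * I) - 1
      = ((Real.cos θ - 1 : ℝ) : ℂ) + ((Real.sin θ : ℝ) : ℂ) * I := by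
    rw [Complex.exp_mul_I, ← Complex.ofReal_cos, ← Complex.ofReal_sin]
    push_cast
    ring
  rw [h, Complex.norm_def, Complex.normSq_add_mul_I]
  have h1 : (Real.cos θ - 1) ^ 2 + Real.sin θ ^ 2 = 2 - 2 * Real.cos θ := by
    have := Real.sin_sq_add_cos_sq θ
    ring_nf
    nlinarith [Real.sin_sq_add_cos_sq θ]
  have h2 : 2 - 2 * Real.cos θ ≤ θ ^ 2 := by
    have := Real.one_sub_sq_div_two_le_cos (x := θ)
    linarith
  calc Real.sqrt ((Real.cos θ - 1) ^ 2 + Real.sin θ ^ 2) ≤ Real.sqrt (θ ^ 2) := by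
        apply Real.sqrt_le_sqrt; rw [h1]; exact h2
    _ = |θ| := Real.sqrt_sq_eq_abs θ

lemma norm_jacobiScalar_le (l t : ℝ) : ‖jacobiScalar l t‖ ≤ |t| := by
  unfold jacobiScalar
  split_ifs with hl
  · simp
  · have hI : (-I * l * t : ℂ) = ((-(l * t) : ℝ) : ℂ) * I := by push_cast; ring
    rw [hI, norm_mul, norm_div]
    have h2 := norm_exp_I_sub_one_le (-(l * t))
    have hln : ‖(l : ℂ)‖ = |l| := by rw [Complex.norm_real, Real.norm_eq_abs]
    rw [Complex.norm_I, hln, abs_neg, abs_mul] at *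
    have hlpos : 0 < |l| := abs_pos.mpr hl
    rw [one_div]
    calc |l|⁻¹ * ‖Complex.exp (((-(l * t) : ℝ) : ℂ) * I) - 1‖ ≤ |l|⁻¹ * (|l| * |t|) := by
          apply mul_le_mul_of_nonneg_left _ (by positivity)
          simpa [abs_mul] using norm_exp_I_sub_one_le (-(l * t))
      _ = |t| := by field_simp

lemma jacobiScalar_eq_zero_iff {l T : ℝ} (hT : 0 < T) :
    jacobiScalar l T = 0 ↔ ∃ m : ℕ+, l ≠ 0 ∧ T = 2 * Real.pi * m / |l| := by
  unfold jacobiScalar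
  split_ifs with hl
  · simp only [Complex.ofReal_eq_zero]
    constructor
    · intro h; exact absurd h hT.ne'
    · rintro ⟨m, hm, -⟩; exact absurd hl hm
  · have hl' : (l : ℂ) ≠ 0 := by exact_mod_cast hl
    rw [mul_eq_zero, _root_.div_eq_zero_iff]
    have hInz : ¬(I = 0 ∨ (l : ℂ) = 0) := by
      rintro (h | h); exact I_ne_zero h; exact hl' h
    simp only [hInz, false_or, sub_eq_zero]
    rw [show (1 : ℂ) = Complex.exp 0 by simp, Complex.exp_eq_exp_iff_exists_int]
    constructor
    · rintro ⟨n, hn⟩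
      rw [zero_add] at hn
      have hreal : -(l * T) = n * (2 * Real.pi) := by
        have : ((-(l * T) : ℝ) : ℂ) * I = ((n * (2 * Real.pi) : ℝ) : ℂ) * I := by
          have e1 : ((-(l * T) : ℝ) : ℂ) * I = -I * l * T := by push_cast; ring
          rw [e1, hn]; push_cast; ring
        have := mul_right_cancel₀ I_ne_zero this
        exact_mod_cast this
      have hn0 : n ≠ 0 := by
        rintro rfl
        simp at hreal
        rcases hreal with h | h
        · exact hl h
        · exact hT.ne' h
      refine ⟨⟨n.natAbs, Int.natAbs_pos.mpr hn0⟩, hl, ?_⟩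
      have hlT : |l| * T = 2 * Real.pi * n.natAbs := by
        have : |l * T| = |n * (2 * Real.pi)| := by rw [← abs_neg (l * T), hreal]
        rw [abs_mul, abs_of_pos hT] at this
        rw [this, abs_mul, abs_of_pos (by positivity : (0:ℝ) < 2 * Real.pi)]
        rw [Nat.cast_natAbs]
        push_cast
        ring
      rw [eq_div_iff (abs_ne_zero.mpr hl)]
      rw [PNat.mk_coe]
      linarith [hlT]
    · rintro ⟨m, -, hTm⟩
      rcases lt_or_gt_of_ne hl with hneg | hpos
      · refine ⟨m, ?_⟩
        rw [zero_add]
        have h1 : -(l * T) = (m : ℝ) * (2 * Real.pi) := by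
          rw [hTm, abs_of_neg hneg]; field_simp
        have hcast : (-I * l * T : ℂ) = ((-(l * T) : ℝ) : ℂ) * I := by push_cast; ring
        rw [hcast, h1]
        push_cast
        ring
      · refine ⟨-m, ?_⟩
        rw [zero_add]
        have h1 : -(l * T) = -(m : ℝ) * (2 * Real.pi) := by
          rw [hTm, abs_of_pos hpos]; field_simp
        have hcast : (-I * l * T : ℂ) = ((-(l * T) : ℝ) : ℂ) * I := by push_cast; ring
        rw [hcast, h1]
        push_cast
        ring

lemma exists_diag {H : Type*} [NormedAddCommGroup H] [InnerProductSpace ℂ H] [CompleteSpace H]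
    (v : HilbertBasis ℕ ℂ H) (c : ℕ → ℂ) {C : ℝ} (hC : 0 ≤ C) (hc : ∀ k, ‖c k‖ ≤ C) :
    ∃ Φ : H →L[ℂ] H, (∀ k, Φ (v k) = c k • v k) ∧
      (∀ x, ⇑(v.repr (Φ x)) = fun k => c k * v.repr x k) := by
  have htwo : (0:ℝ) < (2 : ℝ≥0∞).toReal := by norm_num
  have hmem : ∀ f : lp (fun _ : ℕ => ℂ) 2, Memℓp (fun k => c k * f k) 2 := by
    intro f
    apply memℓp_gen
    have hs := (lp.memℓp f).summable htwo
    apply Summable.of_nonneg_of_le (fun k => Real.rpow_nonneg (norm_nonneg _) _)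
      (fun k => ?_) (hs.mul_left (C ^ (2 : ℝ≥0∞).toReal))
    rw [norm_mul, Real.mul_rpow (norm_nonneg _) (norm_nonneg _)]
    exact mul_le_mul_of_nonneg_right
      (Real.rpow_le_rpow (norm_nonneg _) (hc k) htwo.le)
      (Real.rpow_nonneg (norm_nonneg _) _)
  set L : H →ₗ[ℂ] H :=
    { toFun := fun x => v.repr.symm ⟨fun k => c k * v.repr x k, hmem _⟩
      map_add' := by
        intro x y
        dsimp only
        rw [← map_add]
        congr 1
        apply lp.ext
        funext k
        simp only [lp.coeFn_add, Pi.add_apply, map_add]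
        ring
      map_smul' := by
        intro a x
        dsimp only
        rw [RingHom.id_apply, ← map_smul]
        congr 1
        apply lp.ext
        funext k
        simp only [lp.coeFn_smul, Pi.smul_apply, map_smul, smul_eq_mul]
        ring } with hL
  have hbound : ∀ x : H, ‖L x‖ ≤ C * ‖x‖ := by
    intro x
    have hLx : ‖L x‖ = ‖(⟨fun k => c k * v.repr x k, hmem _⟩ : lp (fun _ : ℕ => ℂ) 2)‖ := by
      rw [hL]; exact v.repr.symm.norm_map _
    rw [hLx, ← v.repr.norm_map x]
    apply lp.norm_le_of_tsum_le htwo (by positivity)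
    have hsum1 : Summable fun k => ‖c k * v.repr x k‖ ^ (2 : ℝ≥0∞).toReal :=
      (hmem (v.repr x)).summable htwo
    have hsum2 : Summable fun k => C ^ (2 : ℝ≥0∞).toReal * ‖v.repr x k‖ ^ (2 : ℝ≥0∞).toReal :=
      ((lp.memℓp (v.repr x)).summable htwo).mul_left _
    calc ∑' k, ‖c k * v.repr x k‖ ^ (2 : ℝ≥0∞).toReal
        ≤ ∑' k, C ^ (2 : ℝ≥0∞).toReal * ‖v.repr x k‖ ^ (2 : ℝ≥0∞).toReal := by
          apply Summable.tsum_le_tsum _ hsum1 hsum2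
          intro k
          rw [norm_mul, Real.mul_rpow (norm_nonneg _) (norm_nonneg _)]
          exact mul_le_mul_of_nonneg_right
            (Real.rpow_le_rpow (norm_nonneg _) (hc k) htwo.le)
            (Real.rpow_nonneg (norm_nonneg _) _)
      _ = C ^ (2 : ℝ≥0∞).toReal * ∑' k, ‖v.repr x k‖ ^ (2 : ℝ≥0∞).toReal := tsum_mul_left
      _ = C ^ (2 : ℝ≥0∞).toReal * ‖v.repr x‖ ^ (2 : ℝ≥0∞).toReal := by
          rw [← lp.norm_rpow_eq_tsum htwo]
      _ = (C * ‖v.repr x‖) ^ (2 : ℝ≥0∞).toReal := by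
          rw [Real.mul_rpow hC (norm_nonneg _)]
  refine ⟨L.mkContinuous C hbound, ?_, ?_⟩
  · intro k
    show v.repr.symm ⟨fun j => c j * v.repr (v k) j, hmem _⟩ = c k • v k
    have h1 : (⟨fun j => c j * v.repr (v k) j, hmem _⟩ : lp (fun _ : ℕ => ℂ) 2)
        = lp.single (E := fun _ : ℕ => ℂ) 2 k (c k) := by
      apply lp.ext
      funext j
      show c j * v.repr (v k) j = lp.single (E := fun _ : ℕ => ℂ) 2 k (c k) j
      rw [v.repr_self]
      by_cases hj : j = k
      · subst hj
        rw [lp.single_apply_self, lp.single_apply_self, mul_one]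
      · rw [lp.single_apply_ne _ _ _ hj, lp.single_apply_ne _ _ _ hj, mul_zero]
    rw [h1]
    have h2 : lp.single (E := fun _ : ℕ => ℂ) 2 k (c k) = c k • lp.single 2 k (1 : ℂ) := by
      rw [← lp.single_smul, smul_eq_mul, mul_one]
    rw [h2, map_smul, v.repr_symm_single]
  · intro x
    show ⇑(v.repr (v.repr.symm ⟨fun k => c k * v.repr x k, hmem _⟩)) = _
    rw [LinearIsometryEquiv.apply_symm_apply]

/-- The diagonalized Jacobi solution operator along the Reeb geodesic: given a Hilbert
basis `(v_k)` and a bounded sequence of reals `(λ_k)`, for each `t` there is a unique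
bounded operator `Φ(t)` with `Φ(t) v_k = f_{λ_k}(t) v_k`, and for `T > 0` the operator
`Φ(T)` fails to be injective iff `T = 2πm/|λ_k|` for some index `k` (with `λ_k ≠ 0`) and
positive integer `m`. -/
theorem jacobi_solution_operator_conjugate_points {H : Type*} [NormedAddCommGroup H]
    [InnerProductSpace ℂ H] [CompleteSpace H]
    (v : HilbertBasis ℕ ℂ H) (lam : ℕ → ℝ) (hbd : ∃ M : ℝ, ∀ k, |lam k| ≤ M) :
    (∀ t : ℝ, ∃! Φ : H →L[ℂ] H, ∀ k, Φ (v k) = jacobiScalar (lam k) t • v k) ∧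
      ∀ T : ℝ, 0 < T → ∀ Φ : H →L[ℂ] H,
        (∀ k, Φ (v k) = jacobiScalar (lam k) T • v k) →
        (¬ Function.Injective Φ ↔
          ∃ k, ∃ m : ℕ+, lam k ≠ 0 ∧ T = 2 * Real.pi * m / |lam k|) := by
  have main : ∀ t : ℝ, ∃ Φ : H →L[ℂ] H, (∀ k, Φ (v k) = jacobiScalar (lam k) t • v k) ∧
      (∀ x, ⇑(v.repr (Φ x)) = fun k => jacobiScalar (lam k) t * v.repr x k) :=
    fun t => exists_diag v _ (abs_nonneg t) (fun k => norm_jacobiScalar_le _ _)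
  have uniq : ∀ t : ℝ, ∀ Φ₁ Φ₂ : H →L[ℂ] H,
      (∀ k, Φ₁ (v k) = jacobiScalar (lam k) t • v k) →
      (∀ k, Φ₂ (v k) = jacobiScalar (lam k) t • v k) → Φ₁ = Φ₂ := by
    intro t Φ₁ Φ₂ h1 h2
    apply ContinuousLinearMap.ext_on
      (Submodule.dense_iff_topologicalClosure_eq_top.mpr v.dense_span)
    rintro x ⟨k, rfl⟩
    rw [h1 k, h2 k]
  refine ⟨fun t => ?_, fun T hT Φ hΦ => ?_⟩
  · obtain ⟨Φ, hΦ, -⟩ := main t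
    exact ⟨Φ, hΦ, fun Ψ hΨ => uniq t Ψ Φ hΨ hΦ⟩
  · obtain ⟨Φ₀, hΦ₀, hrepr⟩ := main T
    obtain rfl : Φ = Φ₀ := uniq T Φ Φ₀ hΦ hΦ₀
    constructor
    · intro hnotinj
      by_contra hno
      push_neg at hno
      apply hnotinj
      have hnz : ∀ k, jacobiScalar (lam k) T ≠ 0 := by
        intro k hk
        rw [jacobiScalar_eq_zero_iff hT] at hk
        obtain ⟨m, hm, hTm⟩ := hk
        exact hno k m hm hTm
      rw [injective_iff_map_eq_zero]
      intro x hx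
      have h := hrepr x
      rw [hx, map_zero] at h
      have hcoeff : ∀ k, v.repr x k = 0 := by
        intro k
        have hk := (congrFun h k).symm
        rw [lp.coeFn_zero, Pi.zero_apply] at hk
        exact (mul_eq_zero.mp hk).resolve_left (hnz k)
      have hx0 : v.repr x = 0 := by
        apply lp.ext
        funext k
        rw [lp.coeFn_zero, Pi.zero_apply]
        exact hcoeff k
      have := v.repr.map_eq_zero_iff.mp hx0
      exact this
    · rintro ⟨k, m, hm, hTm⟩
      have hz : jacobiScalar (lam k) T = 0 :=
        (jacobiScalar_eq_zero_iff hT).mpr ⟨m, hm, hTm⟩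
      intro hinj
      have h0 : Φ (v k) = Φ 0 := by rw [hΦ₀ k, hz, zero_smul, map_zero]
      have hvk : (v k : H) = 0 := hinj h0
      have hnorm := v.orthonormal.1 k
      rw [hvk, norm_zero] at hnorm
      exact one_ne_zero hnorm.symm
end

section
/- Let H be a separable complex Hilbert space with Hilbert basis (v_k)_{k∈ℕ}, and let (λ_k) be a sequence of real numbers with λ_k → 0. For λ ≠ 0 set f_λ(t) = (i/λ)(e^{−iλt} − 1), and set f_0(t) = t. Fix T > 0 and let Φ(T) be the bounded operator with Φ(T) v_k = f_{λ_k}(T) v_k for all k. Then the kernel of Φ(T) is finite-dimensional. -/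
open Complex

lemma jacobiScalar_ne_zero (l T : ℝ) (hT : 0 < T) (hl : |l| * T < 2 * Real.pi) :
    jacobiScalar l T ≠ 0 := by
  unfold jacobiScalar
  rcases eq_or_ne l 0 with h | h
  · simp [h, hT.ne']
  · simp only [h, if_neg]
    intro hz
    rcases mul_eq_zero.mp hz with h1 | h2
    · exact (div_ne_zero I_ne_zero (by exact_mod_cast h)) h1
    · have hexp : Complex.exp (-I * l * T) = 1 := by linear_combination h2
      obtain ⟨n, hn⟩ := Complex.exp_eq_one_iff.mp hexp
      have : ((-(l * T) : ℝ) : ℂ) * I = ((n * (2 * Real.pi) : ℝ) : ℂ) * I := by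
        push_cast
        ring_nf
        ring_nf at hn
        linear_combination hn
      have hreal : -(l * T) = n * (2 * Real.pi) := by
        exact_mod_cast mul_right_cancel₀ I_ne_zero this
      rcases eq_or_ne n 0 with hn0 | hn0
      · simp [hn0] at hreal
        rcases hreal with h' | h'
        · exact h h'
        · exact hT.ne' h'
      · have h1 : (1 : ℝ) ≤ |(n : ℝ)| := by
          exact_mod_cast Int.one_le_abs hn0
        have : 2 * Real.pi ≤ |l * T| := by
          rw [show l * T = -(n * (2 * Real.pi)) by linarith, abs_neg, abs_mul]
          rw [abs_of_pos (by positivity : (0:ℝ) < 2 * Real.pi)]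
          nlinarith [Real.pi_pos]
        rw [abs_mul, abs_of_pos hT] at this
        linarith

/-- Conjugate points along the Reeb geodesic are monoconjugate of finite order: if
`λ_k → 0` and `Φ(T)` is the diagonal operator with entries `f_{λ_k}(T)` on a Hilbert
basis `(v_k)`, then the kernel of `Φ(T)` is finite-dimensional. -/
theorem jacobi_solution_operator_finite_order {H : Type*} [NormedAddCommGroup H]
    [InnerProductSpace ℂ H] [CompleteSpace H]
    (v : HilbertBasis ℕ ℂ H) (lam : ℕ → ℝ)
    (hlim : Filter.Tendsto lam Filter.atTop (nhds 0))
    (T : ℝ) (hT : 0 < T) (Φ : H →L[ℂ] H)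
    (hΦ : ∀ k, Φ (v k) = jacobiScalar (lam k) T • v k) :
    FiniteDimensional ℂ (LinearMap.ker (Φ : H →ₗ[ℂ] H)) := by
  -- key: inner product formula
  have key : ∀ (x : H) (k : ℕ),
      (inner ℂ (v k) (Φ x) : ℂ) = jacobiScalar (lam k) T * v.repr x k := by
    intro x k
    have h := ((v.hasSum_repr x).mapL Φ).mapL (innerSL ℂ (v k))
    have h2 : HasSum (fun i => if i = k then jacobiScalar (lam k) T * v.repr x k else 0)
        ((innerSL ℂ (v k)) (Φ (x))) := by
      refine h.congr_fun fun i => ?_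
      simp only [innerSL_apply_apply, map_smul, hΦ, inner_smul_right]
      rcases eq_or_ne i k with rfl | hik
      · simp [orthonormal_iff_ite.mp v.orthonormal i i]
        simp [v.orthonormal.1 i]
        ring
      · simp [orthonormal_iff_ite.mp v.orthonormal k i, Ne.symm hik, hik]
    have h3 := hasSum_ite_eq k (jacobiScalar (lam k) T * v.repr x k)
    simpa using (h3.unique h2).symm
  -- eventually nonzero
  have hev : ∀ᶠ k in Filter.atTop, |lam k| * T < 2 * Real.pi := by
    have : ∀ᶠ k in Filter.atTop, |lam k| < 2 * Real.pi / T := by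
      have h0 := hlim.abs
      rw [abs_zero] at h0
      exact h0.eventually (eventually_lt_nhds (by positivity : (0:ℝ) < 2 * Real.pi / T))
    filter_upwards [this] with k hk
    calc |lam k| * T < (2 * Real.pi / T) * T := by exact mul_lt_mul_of_pos_right hk hT
    _ = 2 * Real.pi := by field_simp
  obtain ⟨N, hN⟩ := Filter.eventually_atTop.mp hev
  -- injective map into Fin N → ℂ
  let g : (LinearMap.ker (Φ : H →ₗ[ℂ] H)) →ₗ[ℂ] (Fin N → ℂ) :=
    { toFun := fun x i => v.repr x (i : ℕ)
      map_add' := by intro a b; ext i; simp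
      map_smul' := by intro c a; ext i; simp }
  have hg : Function.Injective g := by
    rw [← LinearMap.ker_eq_bot]
    rw [Submodule.eq_bot_iff]
    rintro ⟨x, hx⟩ hgx
    have hx0 : Φ x = 0 := hx
    have hall : ∀ k, v.repr x k = 0 := by
      intro k
      rcases lt_or_ge k N with hk | hk
      · have hgx' := LinearMap.mem_ker.mp hgx
        have := congrFun hgx' ⟨k, hk⟩
        simpa [g] using this
      · have h0 : jacobiScalar (lam k) T * v.repr x k = 0 := by
          rw [← key x k, hx0]; simp
        have hne := jacobiScalar_ne_zero (lam k) T hT (hN k hk)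
        exact (mul_eq_zero.mp h0).resolve_left hne
    have : v.repr x = 0 := by
      ext k; simpa using hall k
    have hx0' : x = 0 := by
      have := v.repr.injective (by simpa using this)
      simpa using this
    exact Subtype.ext hx0'
  exact FiniteDimensional.of_injective g hg
end
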